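/- For parameters t¹, t² ∈ ℂ, the bilinear bracket on ℂ³ given by the matrix [[0, 1+t¹, 1],[0, 0, −1],[t², 0, 0]] (i.e., [f1,f3] = (1+t¹)f1, [f2,f3] = f1 − f2, [f1,f2] = t² f3) satisfies the Jacobi identity if and only if t¹·t² = 0. -/
import Mathlib


/-- The bracket on `ℂ³` with matrix `[[0, 1+t¹, 1],[0, 0, −1],[t², 0, 0]]`:
`[f1,f3] = (1+t¹) f1`, `[f2,f3] = f1 − f2`, `[f1,f2] = t² f3`. -/
def br (t1 t2 : ℂ) (u v : Fin 3 → ℂ) : Fin 3 → ℂ :=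
  fun k =>
    if k = 0 then (1 + t1) * (u 0 * v 2 - u 2 * v 0) + (u 1 * v 2 - u 2 * v 1)
    else if k = 1 then -(u 1 * v 2 - u 2 * v 1)
    else t2 * (u 0 * v 1 - u 1 * v 0)

theorem jacobi_iff_t1t2_eq_zero (t1 t2 : ℂ) :
    (∀ a b c : Fin 3 → ℂ,
      br t1 t2 (br t1 t2 a b) c + br t1 t2 (br t1 t2 b c) a + br t1 t2 (br t1 t2 c a) b = 0) ↔
    t1 * t2 = 0 := by
  constructor
  · intro h
    have := congrFun (h ![1,0,0] ![0,1,0] ![0,0,1]) 2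
    simp [br] at this
    linear_combination -this
  · intro h a b c
    funext k
    fin_cases k <;> simp [br] <;> ring_nf <;> linear_combination ((a 0 * b 2 * c 1 - a 0 * b 1 * c 2 - a 1 * b 2 * c 0 - a 2 * b 0 * c 1 + a 1 * b 0 * c 2 + a 2 * b 1 * c 0)) * h
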